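/- Let X and M be finite-dimensional real inner product spaces, a : X × X → ℝ a bounded bilinear form, b : X × M → ℝ a bounded bilinear form. Let X⁰ = {x ∈ X : b(x, m) = 0 for all m ∈ M}. Assume: (i) a is coercive on X⁰, i.e. a(x,x) ≥ α‖x‖² for all x ∈ X⁰ with α > 0; (ii) b satisfies the inf-sup condition: inf_{0≠m∈M} sup_{0≠x∈X} b(x,m)/(‖x‖‖m‖) ≥ β > 0. Then for every pair of linear functionals θ ∈ X*, ψ ∈ M*, there exists a unique (x, m) ∈ X × M with a(x, y) + b(y, m) = θ(y) for all y ∈ X and b(x, n) = ψ(n) for all n ∈ M, and ‖x‖ + ‖m‖ ≤ C(‖θ‖ + ‖ψ‖) for a constant C depending only on α, β, and the boundedness constants. -/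

import Mathlib

open RealInnerProductSpace

noncomputable def rieszMap (V : Type*) [NormedAddCommGroup V] [InnerProductSpace ℝ V]
    [FiniteDimensional ℝ V] : (V →ₗ[ℝ] ℝ) →ₗ[ℝ] V where
  toFun f := (InnerProductSpace.toDual ℝ V).symm (LinearMap.toContinuousLinearMap f)
  map_add' f g := by
    apply ext_inner_right ℝ
    intro y
    simp [inner_add_left, InnerProductSpace.toDual_symm_apply]
  map_smul' c f := by
    apply ext_inner_right ℝ
    intro y
    simp [inner_smul_left, InnerProductSpace.toDual_symm_apply]

lemma inner_rieszMap {V : Type*} [NormedAddCommGroup V] [InnerProductSpace ℝ V]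
    [FiniteDimensional ℝ V] (f : V →ₗ[ℝ] ℝ) (y : V) : ⟪rieszMap V f, y⟫ = f y := by
  simp [rieszMap, InnerProductSpace.toDual_symm_apply]

set_option maxHeartbeats 1000000 in
/-- Brezzi theory for saddle-point problems in finite dimensions. -/
theorem stmt_8
    (X M : Type*)
    [NormedAddCommGroup X] [InnerProductSpace ℝ X] [FiniteDimensional ℝ X]
    [NormedAddCommGroup M] [InnerProductSpace ℝ M] [FiniteDimensional ℝ M]
    (a : X →ₗ[ℝ] X →ₗ[ℝ] ℝ) (b : X →ₗ[ℝ] M →ₗ[ℝ] ℝ)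
    (Ca Cb α β : ℝ)
    (h_bdd_a : ∀ x y, |a x y| ≤ Ca * ‖x‖ * ‖y‖)
    (h_bdd_b : ∀ x m, |b x m| ≤ Cb * ‖x‖ * ‖m‖)
    (hα : 0 < α)
    (h_coer : ∀ x : X, (∀ m : M, b x m = 0) → α * ‖x‖ ^ 2 ≤ a x x)
    (hβ : 0 < β)
    (h_infsup : ∀ m : M, ∃ x : X, x ≠ 0 ∧ β * ‖x‖ * ‖m‖ ≤ b x m) :
    ∃ C : ℝ, 0 < C ∧ ∀ (θ : X →L[ℝ] ℝ) (ψ : M →L[ℝ] ℝ),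
      (∃! p : X × M,
        (∀ y : X, a p.1 y + b y p.2 = θ y) ∧ (∀ n : M, b p.1 n = ψ n)) ∧
      (∀ p : X × M,
        ((∀ y : X, a p.1 y + b y p.2 = θ y) ∧ (∀ n : M, b p.1 n = ψ n)) →
        ‖p.1‖ + ‖p.2‖ ≤ C * (‖θ‖ + ‖ψ‖)) := by
  classical
  set Ca' : ℝ := max Ca 0 with hCa'def
  have hCa'0 : (0:ℝ) ≤ Ca' := le_max_right _ _
  have hba' : ∀ x y, |a x y| ≤ Ca' * ‖x‖ * ‖y‖ := by
    intro x y
    refine (h_bdd_a x y).trans ?_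
    have h1 : Ca ≤ Ca' := le_max_left _ _
    nlinarith [norm_nonneg x, norm_nonneg y, mul_nonneg (norm_nonneg x) (norm_nonneg y)]
  set N : ℝ := (β + Ca' + α) * (β + Ca') + α * β with hNdef
  have hN : 0 < N := by
    nlinarith [mul_pos hα hβ,
      mul_nonneg (add_nonneg (add_nonneg hβ.le hCa'0) hα.le) (add_nonneg hβ.le hCa'0)]
  have hABpos : (0:ℝ) < α * β ^ 2 := by positivity
  -- Riesz representative of b in the second variable
  obtain ⟨B', hB'⟩ : ∃ B' : M →ₗ[ℝ] X, ∀ n y, ⟪B' n, y⟫ = b y n :=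
    ⟨(rieszMap X).comp b.flip, fun n y => by simp [inner_rieszMap]⟩
  -- the a priori estimate
  have key : ∀ (θ : X →L[ℝ] ℝ) (ψ : M →L[ℝ] ℝ) (x : X) (m : M),
      (∀ y, a x y + b y m = θ y) → (∀ n, b x n = ψ n) →
      α * β ^ 2 * (‖x‖ + ‖m‖) ≤ N * (‖θ‖ + ‖ψ‖) := by
    intro θ ψ x m heq1 heq2
    have ht : (0:ℝ) ≤ ‖θ‖ := norm_nonneg _
    have hs : (0:ℝ) ≤ ‖ψ‖ := norm_nonneg _
    set K : Submodule ℝ X := LinearMap.range B' with hKdef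
    set x₁ : X := (K.orthogonalProjection x : X) with hx₁def
    set x₀ : X := x - x₁ with hx₀def
    have hx : x = x₀ + x₁ := by rw [hx₀def]; abel
    have hx₀K : x₀ ∈ Kᗮ := K.sub_starProjection_mem_orthogonal x
    have hb₀ : ∀ n, b x₀ n = 0 := by
      intro n
      have h1 := (Submodule.mem_orthogonal K x₀).mp hx₀K (B' n) ⟨n, rfl⟩
      rwa [hB' n x₀] at h1
    have hx₁mem : x₁ ∈ K := SetLike.coe_mem _
    obtain ⟨m', hm'⟩ := LinearMap.mem_range.mp hx₁mem
    -- A1 : β * ‖x₁‖ ≤ ‖ψ‖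
    have hnormsq : ‖x₁‖ ^ 2 = ψ m' := by
      have h1 := hB' m' x₁
      rw [hm'] at h1
      calc ‖x₁‖ ^ 2 = ⟪x₁, x₁⟫ := (real_inner_self_eq_norm_sq x₁).symm
        _ = b x₁ m' := h1
        _ = b x m' := by rw [hx, map_add, LinearMap.add_apply, hb₀ m', zero_add]
        _ = ψ m' := heq2 m'
    have hβm' : β * ‖m'‖ ≤ ‖x₁‖ := by
      obtain ⟨w, hw0, hw⟩ := h_infsup m'
      have hwpos : (0:ℝ) < ‖w‖ := norm_pos_iff.mpr hw0
      have h2 := hB' m' w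
      rw [hm'] at h2
      have h3 : ⟪x₁, w⟫ ≤ ‖x₁‖ * ‖w‖ := real_inner_le_norm _ _
      have h4 : (β * ‖m'‖) * ‖w‖ ≤ ‖x₁‖ * ‖w‖ := by nlinarith
      exact le_of_mul_le_mul_right h4 hwpos
    have A1 : β * ‖x₁‖ ≤ ‖ψ‖ := by
      have h5 : ‖x₁‖ ^ 2 ≤ ‖ψ‖ * ‖m'‖ := by
        rw [hnormsq]
        refine (le_abs_self _).trans ?_
        have := ψ.le_opNorm m'
        rwa [Real.norm_eq_abs] at this
      rcases eq_or_lt_of_le (norm_nonneg x₁) with h | h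
      · rw [← h, mul_zero]; exact hs
      · nlinarith [mul_le_mul_of_nonneg_left h5 hβ.le, mul_le_mul_of_nonneg_left hβm' hs]
    -- A2 : α * ‖x₀‖ ≤ ‖θ‖ + Ca' * ‖x₁‖
    have hax : a x x₀ = θ x₀ := by
      have h1 := heq1 x₀
      rw [hb₀ m, add_zero] at h1
      exact h1
    have A2 : α * ‖x₀‖ ≤ ‖θ‖ + Ca' * ‖x₁‖ := by
      have hc := h_coer x₀ hb₀
      have hsplit : a x x₀ = a x₀ x₀ + a x₁ x₀ := by rw [hx, map_add, LinearMap.add_apply]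
      have hθb : θ x₀ ≤ ‖θ‖ * ‖x₀‖ := by
        refine (le_abs_self _).trans ?_
        have := θ.le_opNorm x₀
        rwa [Real.norm_eq_abs] at this
      have haa : -(a x₁ x₀) ≤ Ca' * ‖x₁‖ * ‖x₀‖ := (neg_le_abs _).trans (hba' x₁ x₀)
      rcases eq_or_lt_of_le (norm_nonneg x₀) with h | h
      · rw [← h, mul_zero]
        have : 0 ≤ Ca' * ‖x₁‖ := mul_nonneg hCa'0 (norm_nonneg _)
        linarith
      · nlinarith
    -- A3 : β * ‖m‖ ≤ ‖θ‖ + Ca' * ‖x‖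
    have A3 : β * ‖m‖ ≤ ‖θ‖ + Ca' * ‖x‖ := by
      obtain ⟨w, hw0, hw⟩ := h_infsup m
      have hwpos : (0:ℝ) < ‖w‖ := norm_pos_iff.mpr hw0
      have h6 : b w m = θ w - a x w := by have := heq1 w; linarith
      have hθw : θ w ≤ ‖θ‖ * ‖w‖ := by
        refine (le_abs_self _).trans ?_
        have := θ.le_opNorm w
        rwa [Real.norm_eq_abs] at this
      have haw : -(a x w) ≤ Ca' * ‖x‖ * ‖w‖ := (neg_le_abs _).trans (hba' x w)
      have h7 : (β * ‖m‖) * ‖w‖ ≤ (‖θ‖ + Ca' * ‖x‖) * ‖w‖ := by nlinarith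
      exact le_of_mul_le_mul_right h7 hwpos
    have A4 : ‖x‖ ≤ ‖x₀‖ + ‖x₁‖ := by
      calc ‖x‖ = ‖x₀ + x₁‖ := by rw [← hx]
        _ ≤ ‖x₀‖ + ‖x₁‖ := norm_add_le _ _
    -- combine
    have P1 : α * β ^ 2 * ‖x‖ ≤ β ^ 2 * ‖θ‖ + β * Ca' * ‖ψ‖ + α * β * ‖ψ‖ := by
      linarith [mul_le_mul_of_nonneg_left A4 (le_of_lt hABpos),
        mul_le_mul_of_nonneg_left A2 (sq_nonneg β),
        mul_le_mul_of_nonneg_left A1 (mul_nonneg hβ.le hCa'0),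
        mul_le_mul_of_nonneg_left A1 (mul_nonneg hα.le hβ.le)]
    have P2 : α * β ^ 2 * ‖m‖ ≤
        α * β * ‖θ‖ + Ca' * β * ‖θ‖ + Ca' * Ca' * ‖ψ‖ + Ca' * α * ‖ψ‖ := by
      linarith [mul_le_mul_of_nonneg_left A3 (mul_nonneg hα.le hβ.le),
        mul_le_mul_of_nonneg_left A4 (mul_nonneg (mul_nonneg hβ.le hCa'0) hα.le),
        mul_le_mul_of_nonneg_left A2 (mul_nonneg hβ.le hCa'0),
        mul_le_mul_of_nonneg_left A1 (mul_nonneg hCa'0 (add_nonneg hCa'0 hα.le))]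
    rw [hNdef]
    linarith [P1, P2,
      mul_nonneg ht (mul_nonneg hβ.le hCa'0),
      mul_nonneg ht (mul_nonneg hCa'0 hCa'0),
      mul_nonneg ht (mul_nonneg hα.le hCa'0),
      mul_nonneg ht (mul_nonneg hα.le hβ.le),
      mul_nonneg hs (mul_nonneg hβ.le hβ.le),
      mul_nonneg hs (mul_nonneg hα.le hβ.le),
      mul_nonneg hs (mul_nonneg hCa'0 hβ.le)]
  -- the saddle-point operator
  obtain ⟨T, hT1, hT2⟩ : ∃ T : X × M →ₗ[ℝ] X × M,
      (∀ (p : X × M) (y : X), ⟪(T p).1, y⟫ = a p.1 y + b y p.2) ∧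
      (∀ (p : X × M) (n : M), ⟪(T p).2, n⟫ = b p.1 n) := by
    refine ⟨LinearMap.prod
      ((rieszMap X).comp ((a.comp (LinearMap.fst ℝ X M)) + (b.flip.comp (LinearMap.snd ℝ X M))))
      ((rieszMap M).comp (b.comp (LinearMap.fst ℝ X M))), ?_, ?_⟩
    · intro p y; simp [inner_add_left, inner_rieszMap]
    · intro p n; simp [inner_rieszMap]
  have hchar : ∀ (θ : X →L[ℝ] ℝ) (ψ : M →L[ℝ] ℝ) (p : X × M),
      T p = ((InnerProductSpace.toDual ℝ X).symm θ, (InnerProductSpace.toDual ℝ M).symm ψ) ↔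
      ((∀ y, a p.1 y + b y p.2 = θ y) ∧ (∀ n, b p.1 n = ψ n)) := by
    intro θ ψ p
    rw [Prod.ext_iff]
    constructor
    · rintro ⟨h1, h2⟩
      constructor
      · intro y
        have h3 := congrArg (fun u => ⟪u, y⟫) h1
        simp only at h3
        rwa [hT1 p y, InnerProductSpace.toDual_symm_apply] at h3
      · intro n
        have h3 := congrArg (fun u => ⟪u, n⟫) h2
        simp only at h3
        rwa [hT2 p n, InnerProductSpace.toDual_symm_apply] at h3
    · rintro ⟨h1, h2⟩
      constructor
      · apply ext_inner_right ℝ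
        intro y
        rw [hT1 p y, InnerProductSpace.toDual_symm_apply, h1 y]
      · apply ext_inner_right ℝ
        intro n
        rw [hT2 p n, InnerProductSpace.toDual_symm_apply, h2 n]
  have hinj : Function.Injective T := by
    rw [injective_iff_map_eq_zero]
    intro p hp
    have h0 : T p = ((InnerProductSpace.toDual ℝ X).symm (0 : X →L[ℝ] ℝ),
        (InnerProductSpace.toDual ℝ M).symm (0 : M →L[ℝ] ℝ)) := by
      rw [hp]; simp; rfl
    obtain ⟨h1, h2⟩ := (hchar 0 0 p).mp h0
    have hb := key 0 0 p.1 p.2 h1 h2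
    simp only [norm_zero, add_zero, mul_zero] at hb
    have hle : ‖p.1‖ + ‖p.2‖ ≤ 0 := by nlinarith [norm_nonneg p.1, norm_nonneg p.2]
    have hp1 : p.1 = 0 := norm_eq_zero.mp (le_antisymm (by linarith [norm_nonneg p.2]) (norm_nonneg _))
    have hp2 : p.2 = 0 := norm_eq_zero.mp (le_antisymm (by linarith [norm_nonneg p.1]) (norm_nonneg _))
    exact Prod.ext hp1 hp2
  have hsurj : Function.Surjective T := LinearMap.injective_iff_surjective.mp hinj
  refine ⟨N / (α * β ^ 2), div_pos hN hABpos, fun θ ψ => ⟨?_, ?_⟩⟩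
  · obtain ⟨p, hp⟩ := hsurj ((InnerProductSpace.toDual ℝ X).symm θ,
      (InnerProductSpace.toDual ℝ M).symm ψ)
    exact ⟨p, (hchar θ ψ p).mp hp, fun q hq => hinj (((hchar θ ψ q).mpr hq).trans hp.symm)⟩
  · intro p hp
    have h1 := key θ ψ p.1 p.2 hp.1 hp.2
    rw [div_mul_eq_mul_div, le_div_iff₀ hABpos]
    nlinarith [h1]
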